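/- Let w̃ ∈ W be a fixed vector with R_{ℓ2}(w̃) < ∞, and fix ε > 0. Then E[ exp( −Σ_{i=1}^n ψ( α|y_i − ⟨x_i,w̃⟩| − α·ε·‖x_i‖ ) ) ] ≤ exp( n·( −α·R_{ℓ1}(w̃) + α·ε·E[‖x‖] + α²·R_{ℓ2}(w̃) + α²·ε²·E[‖x‖²] ) ), where the expectation is over the i.i.d. sample. -/

import Mathlib

open MeasureTheory Real

/-- The ℓ1-risk `R_{ℓ1}(w) = E_{(x,y)∼P}[|y − ⟨x,w⟩|]`. -/
noncomputable def l1Risk {H : Type*} [NormedAddCommGroup H] [InnerProductSpace ℝ H]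
    [MeasurableSpace H] (P : Measure (H × ℝ)) (w : H) : ℝ :=
  ∫ z, |z.2 - (inner ℝ z.1 w : ℝ)| ∂P

/-- The ℓ2-risk `R_{ℓ2}(w) = E_{(x,y)∼P}[(y − ⟨x,w⟩)²]`. -/
noncomputable def l2Risk {H : Type*} [NormedAddCommGroup H] [InnerProductSpace ℝ H]
    [MeasurableSpace H] (P : Measure (H × ℝ)) (w : H) : ℝ :=
  ∫ z, (z.2 - (inner ℝ z.1 w : ℝ)) ^ 2 ∂P

/-- The truncated empirical risk `R̂_{ψ∘ℓ1}(w) = (1/(nα)) Σ_i ψ(α|y_i − ⟨x_i,w⟩|)`. -/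
noncomputable def truncEmpRisk {H : Type*} [NormedAddCommGroup H] [InnerProductSpace ℝ H]
    (ψ : ℝ → ℝ) (α : ℝ) (n : ℕ) (ω : Fin n → H × ℝ) (w : H) : ℝ :=
  (1 / (n * α)) * ∑ i, ψ (α * |(ω i).2 - (inner ℝ (ω i).1 w : ℝ)|)

/-- The covering number `N(W, ε)`: the minimal cardinality of a finite ε-net of `W`
consisting of points of `W`. -/
noncomputable def coveringNumber {H : Type*} [NormedAddCommGroup H] (W : Set H) (ε : ℝ) : ℕ :=
  sInf {k | ∃ N : Finset H, ↑N ⊆ W ∧ N.card = k ∧ ∀ w ∈ W, ∃ v ∈ N, ‖w - v‖ ≤ ε}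

lemma lintegral_pi_prod_aux {E : Type*} [MeasurableSpace E] (μ : Measure E)
    [IsProbabilityMeasure μ] (f : E → ENNReal) (hf : Measurable f) :
    ∀ n : ℕ, ∫⁻ ω : Fin n → E, ∏ i, f (ω i) ∂Measure.pi (fun _ => μ) = (∫⁻ x, f x ∂μ) ^ n := by
  intro n
  induction n with
  | zero => simp
  | succ n ih =>
    have hmp := measurePreserving_piFinSuccAbove (fun _ : Fin (n + 1) => μ) 0
    have hg : Measurable (fun p : E × (Fin n → E) => f p.1 * ∏ j, f (p.2 j)) := by
      exact (hf.comp measurable_fst).mul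
        (Finset.measurable_prod _ fun j _ => hf.comp ((measurable_pi_apply j).comp measurable_snd))
    calc ∫⁻ ω : Fin (n+1) → E, ∏ i, f (ω i) ∂Measure.pi (fun _ => μ)
        = ∫⁻ ω : Fin (n+1) → E,
            (fun p : E × (Fin n → E) => f p.1 * ∏ j, f (p.2 j))
              ((MeasurableEquiv.piFinSuccAbove (fun _ : Fin (n+1) => E) 0) ω)
            ∂Measure.pi (fun _ => μ) := by
          apply lintegral_congr; intro ω
          simp [MeasurableEquiv.piFinSuccAbove, Fin.prod_univ_succ, Fin.succAbove, Fin.tail]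
      _ = ∫⁻ p : E × (Fin n → E), f p.1 * ∏ j, f (p.2 j)
            ∂(μ.prod (Measure.pi fun _ : Fin n => μ)) := hmp.lintegral_comp hg
      _ = (∫⁻ x, f x ∂μ) * ∫⁻ ω : Fin n → E, ∏ j, f (ω j) ∂Measure.pi (fun _ => μ) :=
          lintegral_prod_mul hf.aemeasurable
            (Finset.measurable_prod _ fun j _ => hf.comp (measurable_pi_apply j)).aemeasurable
      _ = (∫⁻ x, f x ∂μ) ^ (n + 1) := by rw [ih, pow_succ]; ring

/-- Equation (14) of the paper: for a fixed `w̃` with `R_{ℓ2}(w̃) < ∞` and `ε > 0`,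
`E[exp(−Σ_i ψ(α|y_i − ⟨x_i,w̃⟩| − αε‖x_i‖))]
  ≤ exp(n(−α R_{ℓ1}(w̃) + αε E‖x‖ + α² R_{ℓ2}(w̃) + α²ε² E‖x‖²))`. -/
theorem mgf_neg_truncated_sum_upper_bound
    {H : Type*} [NormedAddCommGroup H] [InnerProductSpace ℝ H] [CompleteSpace H]
    [MeasurableSpace H] [BorelSpace H]
    (P : Measure (H × ℝ)) [IsProbabilityMeasure P]
    (W : Set H) (ψ : ℝ → ℝ)
    (hψmono : Monotone ψ)
    (hψlb : ∀ x : ℝ, -Real.log (1 - x + x ^ 2 / 2) ≤ ψ x)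
    (hψub : ∀ x : ℝ, ψ x ≤ Real.log (1 + x + x ^ 2 / 2))
    (n : ℕ) (α : ℝ) (hα : 0 < α)
    -- (A2): E‖x‖² < ∞ (and hence E‖x‖ < ∞)
    (hxInt : Integrable (fun z : H × ℝ => ‖z.1‖) P)
    (hA2 : Integrable (fun z : H × ℝ => ‖z.1‖ ^ 2) P)
    -- w̃ : a fixed vector of W with R_{ℓ2}(w̃) < ∞
    (wt : H) (hwtW : wt ∈ W)
    (hInt1 : Integrable (fun z : H × ℝ => |z.2 - (inner ℝ z.1 wt : ℝ)|) P)
    (hInt2 : Integrable (fun z : H × ℝ => (z.2 - (inner ℝ z.1 wt : ℝ)) ^ 2) P)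
    (ε : ℝ) (hε : 0 < ε) :
    ∫⁻ ω : Fin n → H × ℝ,
        ENNReal.ofReal
          (Real.exp (-∑ i, ψ (α * |(ω i).2 - (inner ℝ (ω i).1 wt : ℝ)| - α * ε * ‖(ω i).1‖)))
        ∂Measure.pi (fun _ : Fin n => P) ≤
      ENNReal.ofReal
        (Real.exp (n * (-(α * l1Risk P wt) + α * ε * (∫ z, ‖z.1‖ ∂P)
          + α ^ 2 * l2Risk P wt + α ^ 2 * ε ^ 2 * (∫ z, ‖z.1‖ ^ 2 ∂P)))) := by
  set d : H × ℝ → ℝ := fun z => z.2 - (inner ℝ z.1 wt : ℝ) with hd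
  set t : H × ℝ → ℝ := fun z => α * |d z| - α * ε * ‖z.1‖ with ht
  set c : ℝ := -(α * l1Risk P wt) + α * ε * (∫ z, ‖z.1‖ ∂P)
      + α ^ 2 * l2Risk P wt + α ^ 2 * ε ^ 2 * (∫ z, ‖z.1‖ ^ 2 ∂P) with hc
  set h : H × ℝ → ℝ := fun z =>
    1 - α * |d z| + α * ε * ‖z.1‖ + α ^ 2 * (d z) ^ 2 + α ^ 2 * ε ^ 2 * ‖z.1‖ ^ 2 with hh
  -- measurability
  have hinner : Measurable fun z : H × ℝ => (inner ℝ z.1 wt : ℝ) :=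
    ((continuous_id.inner continuous_const).measurable).comp measurable_fst
  have hdm : Measurable d := measurable_snd.sub hinner
  have htm : Measurable t :=
    (hdm.abs.const_mul α).sub ((measurable_fst.norm).const_mul (α * ε))
  have hfm : Measurable fun z : H × ℝ => ENNReal.ofReal (Real.exp (-ψ (t z))) :=
    ENNReal.measurable_ofReal.comp (Real.measurable_exp.comp (hψmono.measurable.comp htm).neg)
  -- pointwise bound
  have hpt : ∀ z : H × ℝ, Real.exp (-ψ (t z)) ≤ h z := by
    intro z
    have hq : (0:ℝ) < 1 - t z + (t z) ^ 2 / 2 := by nlinarith [sq_nonneg (t z - 1)]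
    have h1 : Real.exp (-ψ (t z)) ≤ 1 - t z + (t z) ^ 2 / 2 := by
      have hlb := hψlb (t z)
      calc Real.exp (-ψ (t z)) ≤ Real.exp (Real.log (1 - t z + (t z) ^ 2 / 2)) :=
            Real.exp_le_exp.mpr (by linarith)
        _ = 1 - t z + (t z) ^ 2 / 2 := Real.exp_log hq
    have h2 : 1 - t z + (t z) ^ 2 / 2 ≤ h z := by
      have habs : |d z| ^ 2 = (d z) ^ 2 := sq_abs _
      simp only [hh, ht]
      rw [← sq_abs (d z)]
      nlinarith [sq_nonneg (α * |d z| + α * ε * ‖z.1‖)]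
    exact le_trans h1 h2
  have hnn : ∀ z : H × ℝ, 0 ≤ h z := fun z => le_trans (Real.exp_pos _).le (hpt z)
  -- integrability and value of ∫ h
  have IA : Integrable (fun z : H × ℝ => α * |d z|) P := hInt1.const_mul α
  have IB : Integrable (fun z : H × ℝ => α * ε * ‖z.1‖) P := hxInt.const_mul (α * ε)
  have IC : Integrable (fun z : H × ℝ => α ^ 2 * (d z) ^ 2) P := hInt2.const_mul (α ^ 2)
  have ID : Integrable (fun z : H × ℝ => α ^ 2 * ε ^ 2 * ‖z.1‖ ^ 2) P :=
    hA2.const_mul (α ^ 2 * ε ^ 2)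
  have I1 : Integrable (fun z : H × ℝ => 1 - α * |d z|) P := (integrable_const 1).sub IA
  have I2 : Integrable (fun z : H × ℝ => 1 - α * |d z| + α * ε * ‖z.1‖) P := I1.add IB
  have I3 : Integrable (fun z : H × ℝ =>
      1 - α * |d z| + α * ε * ‖z.1‖ + α ^ 2 * (d z) ^ 2) P := I2.add IC
  have Ih : Integrable h P := I3.add ID
  have hval : ∫ z, h z ∂P = 1 + c := by
    simp only [hh]
    rw [integral_add I3 ID, integral_add I2 IC, integral_add I1 IB,
      integral_sub (integrable_const 1) IA, integral_const,
      integral_const_mul, integral_const_mul, integral_const_mul, integral_const_mul]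
    simp only [probReal_univ, measure_univ, ENNReal.toReal_one, smul_eq_mul, one_mul]
    simp only [hc, l1Risk, l2Risk, hd]
    ring
  -- single-factor bound
  have hfle : ∫⁻ z, ENNReal.ofReal (Real.exp (-ψ (t z))) ∂P ≤ ENNReal.ofReal (Real.exp c) := by
    calc ∫⁻ z, ENNReal.ofReal (Real.exp (-ψ (t z))) ∂P
        ≤ ∫⁻ z, ENNReal.ofReal (h z) ∂P :=
          lintegral_mono fun z => ENNReal.ofReal_le_ofReal (hpt z)
      _ = ENNReal.ofReal (∫ z, h z ∂P) :=
          (MeasureTheory.ofReal_integral_eq_lintegral_ofReal Ih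
            (Filter.Eventually.of_forall hnn)).symm
      _ = ENNReal.ofReal (1 + c) := by rw [hval]
      _ ≤ ENNReal.ofReal (Real.exp c) :=
          ENNReal.ofReal_le_ofReal (by have := Real.add_one_le_exp c; linarith)
  -- assemble
  calc ∫⁻ ω : Fin n → H × ℝ,
        ENNReal.ofReal
          (Real.exp (-∑ i, ψ (α * |(ω i).2 - (inner ℝ (ω i).1 wt : ℝ)| - α * ε * ‖(ω i).1‖)))
        ∂Measure.pi (fun _ : Fin n => P)
      = ∫⁻ ω : Fin n → H × ℝ, ∏ i, ENNReal.ofReal (Real.exp (-ψ (t (ω i))))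
          ∂Measure.pi (fun _ : Fin n => P) := by
        apply lintegral_congr; intro ω
        rw [← ENNReal.ofReal_prod_of_nonneg (fun i _ => (Real.exp_pos _).le)]
        congr 1
        rw [← Real.exp_sum]
        congr 1
        rw [← Finset.sum_neg_distrib]
    _ = (∫⁻ z, ENNReal.ofReal (Real.exp (-ψ (t z))) ∂P) ^ n :=
        lintegral_pi_prod_aux P _ hfm n
    _ ≤ (ENNReal.ofReal (Real.exp c)) ^ n := pow_le_pow_left₀ zero_le hfle n
    _ = ENNReal.ofReal (Real.exp c ^ n) := (ENNReal.ofReal_pow (Real.exp_pos _).le n).symm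
    _ = ENNReal.ofReal (Real.exp (n * c)) := by rw [← Real.exp_nat_mul]
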